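/- Let q = 2^m, and for y, z ∈ F_q and α ∈ F_{q^3} with Tr_{F_{q^3}/F_q}(α) = 0 and {1, α, α^q} a basis, write X = x + yα + zα^q with x ∈ F_q. Then Tr_{F_{q^3}/F_q}(X^{q+1}) = x² + (y² + z² + yz)·Tr_{F_{q^3}/F_q}(α^{q+1}). -/

import Mathlib

theorem stmt_5 (m : ℕ) (hm : 0 < m) (q : ℕ) (hq : q = 2 ^ m)
    (F E : Type*) [Field F] [Fintype F] [Field E] [Fintype E] [Algebra F E]
    (hF : Fintype.card F = q) (hE : Fintype.card E = q ^ 3)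
    (Tr : E → E) (hTr : ∀ X, Tr X = X + X ^ q + X ^ q ^ 2)
    (α : E) (hα0 : α ≠ 0) (hαtr : Tr α = 0)
    (hb : ∃ b : Module.Basis (Fin 3) F E, b 0 = 1 ∧ b 1 = α ∧ b 2 = α ^ q) :
    ∀ x y z : F,
      Tr ((algebraMap F E x + algebraMap F E y * α + algebraMap F E z * α ^ q) ^ (q + 1)) =
        (algebraMap F E x) ^ 2 +
          algebraMap F E (y ^ 2 + z ^ 2 + y * z) * Tr (α ^ (q + 1)) := by
  intro x y z
  -- characteristic 2 in E
  have htwo : (2 : E) = 0 := by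
    have hc : ((Fintype.card E : ℕ) : E) = 0 := FiniteField.cast_card_eq_zero E
    rw [hE, hq] at hc
    push_cast at hc
    have h2 : (2 : E) ^ (m * 3) = 0 := by rw [pow_mul]; exact_mod_cast hc
    exact pow_eq_zero_iff (by positivity) |>.mp h2
  have hr2 : ringChar E = 2 := by
    have hdvd : ringChar E ∣ 2 := (CharP.cast_eq_zero_iff E (ringChar E) 2).mp htwo
    rcases (Nat.dvd_prime Nat.prime_two).mp hdvd with h | h
    · exact absurd h (CharP.ringChar_ne_one)
    · exact h
  haveI : CharP E 2 := hr2 ▸ ringChar.charP E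
  haveI : Fact (Nat.Prime 2) := ⟨Nat.prime_two⟩
  -- Frobenius is additive
  have hfr : ∀ s t : E, (s + t) ^ q = s ^ q + t ^ q := by
    intro s t; rw [hq]; exact add_pow_char_pow ..
  -- elements of F are fixed
  have hfix : ∀ c : F, (algebraMap F E c) ^ q = algebraMap F E c := by
    intro c; rw [← map_pow, ← hF, FiniteField.pow_card]
  -- q^2 exponent as iterated q
  have hsq : ∀ t : E, t ^ q ^ 2 = (t ^ q) ^ q := by
    intro t; rw [sq, pow_mul]
  -- triple Frobenius is identity
  have hX3 : ∀ t : E, ((t ^ q) ^ q) ^ q = t := by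
    intro t
    have h3 : q * (q * q) = Fintype.card E := by rw [hE]; ring
    rw [← pow_mul, ← pow_mul, h3, FiniteField.pow_card]
  -- α^{q^2} = α + α^q
  have hαqq : (α ^ q) ^ q = α + α ^ q := by
    have h := hαtr
    rw [hTr, hsq] at h
    linear_combination h - (α + α ^ q) * htwo
  have hα3 : ((α ^ q) ^ q) ^ q = α := hX3 _
  set xE := algebraMap F E x with hxE
  set yE := algebraMap F E y with hyE
  set zE := algebraMap F E z with hzE
  have hXq : (xE + yE * α + zE * α ^ q) ^ q
      = xE + yE * α ^ q + zE * (α + α ^ q) := by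
    rw [hfr, hfr, mul_pow, mul_pow, hfix, hfix, hfix, hαqq]
  have hXqq : ((xE + yE * α + zE * α ^ q) ^ q) ^ q
      = xE + yE * (α + α ^ q) + zE * (α ^ q + (α + α ^ q)) := by
    rw [hXq, hfr, hfr, mul_pow, mul_pow, hfix, hfix, hfix, hαqq, hfr, hαqq]
  have hXqqq : (((xE + yE * α + zE * α ^ q) ^ q) ^ q) ^ q
      = xE + yE * α + zE * α ^ q := hX3 _
  have e1 : ∀ t : E, t ^ (q + 1) = t ^ q * t := fun t => pow_succ t q
  rw [hTr, hTr]
  simp only [e1, hsq, mul_pow]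
  rw [hXqqq, hXqq, hXq, hα3, hαqq]
  simp only [map_add, map_mul, map_pow]
  linear_combination (zE^2 * (α^q)^2 + yE*zE*(α^q)^2 + yE*zE*α*α^q + yE*zE*α^2
    - yE^2*(α^q)^2 - yE^2*α*α^q + 4*xE*zE*α^q + 2*xE*zE*α + 2*xE*yE*α^q
    + 2*xE*yE*α + xE^2
    + yE*zE*α*α^q + yE*zE*(α^q)^2 + yE^2*α*α^q + yE^2*(α^q)^2
    + zE^2*α*α^q + zE^2*(α^q)^2) * htwo
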